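/- arXiv:1304.3484 — 2 statements merged into one kernel-verified Lean document; each statement's English description precedes it below -/
import Mathlib

section
/- Let h>0, α,β∈(0,1] and k,s∈ℕ. Then for every n∈ℕ, the fractional h-sum of order α of the function φ_{k,s} satisfies (S_α φ_{k,s})(n) = φ_{k+1,s}(n+1). (This is the first power-rule formula of Proposition 5 of the paper: (_0Δ_h^{−α}φ_{k,s})(nh+a) = φ_{k+1,s}(nh) with a=(α−1)h.) -/
/-- `c γ m = Γ(γ+m)/(Γ(γ)·Γ(m+1))`. -/
noncomputable def cCoeff (γ : ℝ) (m : ℕ) : ℝ :=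
  Real.Gamma (γ + m) / (Real.Gamma γ * Real.Gamma (m + 1))

/-- Fractional `h`-sum of order `γ`: `(S_γ u)(n) = h^γ·∑_{k=0}^{n} c_γ(n−k)·u(k)`. -/
noncomputable def fracSum (h γ : ℝ) (u : ℕ → ℝ) (n : ℕ) : ℝ :=
  h ^ γ * ∑ k ∈ Finset.range (n + 1), cCoeff γ (n - k) * u k

/-- The function `φ_{k,s}` of the paper. -/
noncomputable def phi (h α β : ℝ) (k s : ℕ) (n : ℤ) : ℝ :=
  if (k : ℤ) ≤ n then
    Real.Gamma ((n : ℝ) - (k : ℝ) + 1 + (k : ℝ) * α + (s : ℝ) * β)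
      / (Real.Gamma ((k : ℝ) * α + (s : ℝ) * β + 1) * Real.Gamma ((n : ℝ) - (k : ℝ) + 1))
      * h ^ ((k : ℝ) * α + (s : ℝ) * β)
  else 0

lemma cCoeff_zero (δ : ℝ) (hδ : 0 < δ) : cCoeff δ 0 = 1 := by
  unfold cCoeff
  simp [Real.Gamma_one, (Real.Gamma_pos_of_pos hδ).ne']

lemma cCoeff_succ (δ : ℝ) (hδ : 0 < δ) (m : ℕ) :
    ((m : ℝ) + 1) * cCoeff δ (m + 1) = (δ + m) * cCoeff δ m := by
  unfold cCoeff
  push_cast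
  have h1 : Real.Gamma (δ + ((m : ℝ) + 1)) = (δ + m) * Real.Gamma (δ + m) := by
    rw [show δ + ((m : ℝ) + 1) = (δ + m) + 1 by ring, Real.Gamma_add_one (by positivity)]
  have h2 : Real.Gamma ((m : ℝ) + 1 + 1) = ((m : ℝ) + 1) * Real.Gamma ((m : ℝ) + 1) :=
    Real.Gamma_add_one (by positivity)
  have g1 : Real.Gamma δ ≠ 0 := (Real.Gamma_pos_of_pos hδ).ne'
  have g2 : Real.Gamma ((m : ℝ) + 1) ≠ 0 := (Real.Gamma_pos_of_pos (by positivity)).ne'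
  rw [h1, h2]
  field_simp

lemma vandermonde (a b : ℝ) (ha : 0 < a) (hb : 0 < b) (N : ℕ) :
    ∑ m ∈ Finset.range (N + 1), cCoeff a (N - m) * cCoeff b m = cCoeff (a + b) N := by
  induction N with
  | zero =>
    simp [cCoeff_zero a ha, cCoeff_zero b hb, cCoeff_zero _ (by positivity : (0:ℝ) < a + b)]
  | succ N ih =>
    have hN1 : ((N : ℝ) + 1) ≠ 0 := by positivity
    have key : ((N : ℝ) + 1) * ∑ m ∈ Finset.range (N + 2), cCoeff a (N + 1 - m) * cCoeff b m
        = ((N : ℝ) + 1) * cCoeff (a + b) (N + 1) := by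
      rw [Finset.mul_sum]
      have split : ∀ m ∈ Finset.range (N + 2),
          ((N : ℝ) + 1) * (cCoeff a (N + 1 - m) * cCoeff b m)
            = ((N + 1 - m : ℕ) : ℝ) * cCoeff a (N + 1 - m) * cCoeff b m
              + (m : ℝ) * (cCoeff a (N + 1 - m) * cCoeff b m) := by
        intro m hm
        have hm' : m ≤ N + 1 := Nat.lt_succ_iff.mp (Finset.mem_range.mp hm)
        have hc : ((N + 1 - m : ℕ) : ℝ) = (N : ℝ) + 1 - m := by
          push_cast [Nat.cast_sub hm']; ring
        rw [hc]; ring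
      rw [Finset.sum_congr rfl split, Finset.sum_add_distrib]
      have hA : ∑ m ∈ Finset.range (N + 2),
          ((N + 1 - m : ℕ) : ℝ) * cCoeff a (N + 1 - m) * cCoeff b m
          = ∑ m ∈ Finset.range (N + 1),
              (a + ((N - m : ℕ) : ℝ)) * cCoeff a (N - m) * cCoeff b m := by
        rw [Finset.sum_range_succ]
        simp only [Nat.sub_self, Nat.cast_zero, zero_mul, add_zero]
        refine Finset.sum_congr rfl fun m hm => ?_
        have hm' : m ≤ N := Nat.lt_succ_iff.mp (Finset.mem_range.mp hm)
        have h1 : N + 1 - m = (N - m) + 1 := by omega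
        have h2 : ((N - m + 1 : ℕ) : ℝ) = ((N - m : ℕ) : ℝ) + 1 := by push_cast; ring
        rw [h1, h2, cCoeff_succ a ha (N - m)]
      have hB : ∑ m ∈ Finset.range (N + 2),
          (m : ℝ) * (cCoeff a (N + 1 - m) * cCoeff b m)
          = ∑ m ∈ Finset.range (N + 1),
              (b + (m : ℝ)) * cCoeff b m * cCoeff a (N - m) := by
        rw [Finset.sum_range_succ']
        simp only [Nat.cast_zero, zero_mul, add_zero]
        refine Finset.sum_congr rfl fun m hm => ?_
        have h1 : N + 1 - (m + 1) = N - m := by omega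
        have h2 : ((m + 1 : ℕ) : ℝ) = (m : ℝ) + 1 := by push_cast; ring
        rw [h1, h2]
        rw [show ((m : ℝ) + 1) * (cCoeff a (N - m) * cCoeff b (m + 1))
            = (((m : ℝ) + 1) * cCoeff b (m + 1)) * cCoeff a (N - m) by ring]
        rw [cCoeff_succ b hb m]
      rw [hA, hB]
      have comb : ∑ m ∈ Finset.range (N + 1),
              (a + ((N - m : ℕ) : ℝ)) * cCoeff a (N - m) * cCoeff b m
          + ∑ m ∈ Finset.range (N + 1),
              (b + (m : ℝ)) * cCoeff b m * cCoeff a (N - m)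
          = (a + b + N) * ∑ m ∈ Finset.range (N + 1), cCoeff a (N - m) * cCoeff b m := by
        rw [← Finset.sum_add_distrib, Finset.mul_sum]
        refine Finset.sum_congr rfl fun m hm => ?_
        have hm' : m ≤ N := Nat.lt_succ_iff.mp (Finset.mem_range.mp hm)
        have hc : ((N - m : ℕ) : ℝ) = (N : ℝ) - m := by push_cast [Nat.cast_sub hm']; ring
        rw [hc]; ring
      rw [comb, ih]
      have := cCoeff_succ (a + b) (by positivity) N
      rw [this]
    have := mul_left_cancel₀ hN1 key
    convert this using 2 <;> omega

theorem fracSum_phi_first_power_rule (h α β : ℝ) (hh : 0 < h)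
    (hα1 : 0 < α) (hα2 : α ≤ 1) (hβ1 : 0 < β) (hβ2 : β ≤ 1)
    (k s : ℕ) (n : ℕ) :
    fracSum h α (fun m : ℕ => phi h α β k s (m : ℤ)) n
      = phi h α β (k + 1) s ((n : ℤ) + 1) := by
  unfold fracSum
  by_cases hkn : k ≤ n
  · obtain ⟨N, rfl⟩ : ∃ N, n = k + N := ⟨n - k, by omega⟩
    set γ : ℝ := (k : ℝ) * α + (s : ℝ) * β with hγdef
    clear_value γ
    have hb : (0 : ℝ) < γ + 1 := by rw [hγdef]; positivity
    have hstep : ∀ m : ℕ, phi h α β k s ((k + m : ℕ) : ℤ)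
        = cCoeff (γ + 1) m * h ^ γ := by
      intro m
      unfold phi cCoeff
      rw [if_pos (by push_cast; omega)]
      rw [show ((((k + m : ℕ) : ℤ)) : ℝ) - (k : ℝ) + 1 + (k : ℝ) * α + (s : ℝ) * β
            = (γ + 1) + (m : ℝ) by rw [hγdef]; push_cast; ring,
          show ((((k + m : ℕ) : ℤ)) : ℝ) - (k : ℝ) + 1 = (m : ℝ) + 1 by push_cast; ring,
          ← hγdef]
    have hzero : ∀ j ∈ Finset.range k,
        cCoeff α ((k + N) - j) * phi h α β k s (j : ℤ) = 0 := by
      intro j hj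
      have hj' : j < k := Finset.mem_range.mp hj
      unfold phi
      rw [if_neg (by exact_mod_cast not_le.mpr (by exact_mod_cast hj'))]
      ring
    have hsum : ∑ j ∈ Finset.range (k + N + 1),
          cCoeff α ((k + N) - j) * phi h α β k s (j : ℤ)
        = (∑ m ∈ Finset.range (N + 1), cCoeff α (N - m) * cCoeff (γ + 1) m) * h ^ γ := by
      rw [show k + N + 1 = k + (N + 1) by ring, Finset.sum_range_add,
        Finset.sum_eq_zero hzero, zero_add, Finset.sum_mul]
      refine Finset.sum_congr rfl fun m hm => ?_
      rw [hstep m, show (k + N) - (k + m) = N - m by omega]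
      ring
    rw [hsum, vandermonde α (γ + 1) hα1 hb N]
    unfold phi
    rw [if_pos (by push_cast; omega)]
    rw [show (((((k + N : ℕ) : ℤ) + 1 : ℤ)) : ℝ) - ((k + 1 : ℕ) : ℝ) + 1 + ((k + 1 : ℕ) : ℝ) * α
          + (s : ℝ) * β = (α + (γ + 1)) + (N : ℝ) by rw [hγdef]; push_cast; ring,
        show (((((k + N : ℕ) : ℤ) + 1 : ℤ)) : ℝ) - ((k + 1 : ℕ) : ℝ) + 1 = (N : ℝ) + 1 by
          push_cast; ring,
        show ((k + 1 : ℕ) : ℝ) * α + (s : ℝ) * β + 1 = α + (γ + 1) by rw [hγdef]; push_cast; ring,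
        show ((k + 1 : ℕ) : ℝ) * α + (s : ℝ) * β = α + γ by rw [hγdef]; push_cast; ring,
        Real.rpow_add hh]
    unfold cCoeff
    ring
  · have hzero : ∀ j ∈ Finset.range (n + 1),
        cCoeff α (n - j) * phi h α β k s (j : ℤ) = 0 := by
      intro j hj
      have hj' : j < k := by
        have := Finset.mem_range.mp hj; omega
      unfold phi
      rw [if_neg (by exact_mod_cast not_le.mpr (by exact_mod_cast hj'))]
      ring
    rw [Finset.sum_eq_zero hzero, mul_zero]
    unfold phi
    rw [if_neg (by push_cast; omega)]
end

section
/- Let h>0 and α,β>0, and let u: ℕ→ℝ be any sequence. Then the composition of fractional h-sums satisfies the semigroup property: for every n∈ℕ, (S_α(S_β u))(n) = (S_{α+β} u)(n) = (S_β(S_α u))(n). -/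
open Polynomial Finset

lemma gamma_asc (γ : ℝ) (hγ : 0 < γ) (m : ℕ) :
    Real.Gamma (γ + m) = (ascPochhammer ℝ m).eval γ * Real.Gamma γ := by
  induction m with
  | zero => simp
  | succ m ih =>
    have hne : γ + m ≠ 0 := by positivity
    have h3 : γ + ((m : ℝ) + 1) = (γ + m) + 1 := by ring
    rw [Nat.cast_succ, h3, Real.Gamma_add_one hne, ih, ascPochhammer_succ_right]
    simp [eval_mul]
    ring

lemma cCoeff_eq (γ : ℝ) (hγ : 0 < γ) (m : ℕ) :
    cCoeff γ m = (ascPochhammer ℝ m).eval γ / m.factorial := by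
  have hΓ : Real.Gamma γ ≠ 0 := (Real.Gamma_pos_of_pos hγ).ne'
  have hf : (m.factorial : ℝ) ≠ 0 := Nat.cast_ne_zero.mpr m.factorial_ne_zero
  rw [cCoeff, gamma_asc γ hγ, Real.Gamma_nat_eq_factorial]
  field_simp

lemma ringChoose_neg (γ : ℝ) (k : ℕ) :
    (k.factorial : ℝ) * Ring.choose (-γ : ℝ) k = (-1)^k * (ascPochhammer ℝ k).eval γ := by
  have h1 := Ring.descPochhammer_eq_factorial_smul_choose (-γ : ℝ) k
  have h2 := Polynomial.ascPochhammer_smeval_neg_eq_descPochhammer (-γ : ℝ) k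
  rw [neg_neg] at h2
  rw [Polynomial.ascPochhammer_smeval_eq_eval] at h2
  rw [Int.negOnePow_def, Units.smul_def, zsmul_eq_mul] at h2
  rw [zpow_natCast, Units.val_pow_eq_pow_val, Units.val_neg, Units.val_one] at h2
  push_cast at h2
  have h3 : (descPochhammer ℤ k).smeval (-γ : ℝ) = (-1)^k * (ascPochhammer ℝ k).eval γ := by
    have h4 := congrArg (fun x => ((-1 : ℝ))^k * x) h2
    simp only [← mul_assoc, ← mul_pow, neg_mul_neg, one_mul, one_pow] at h4
    linarith [h4]
  rw [h3] at h1
  rw [h1, nsmul_eq_mul]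

lemma ringChoose_neg' (γ : ℝ) (hγ : 0 < γ) (k : ℕ) :
    Ring.choose (-γ : ℝ) k = (-1)^k * cCoeff γ k := by
  have hf : (k.factorial : ℝ) ≠ 0 := Nat.cast_ne_zero.mpr k.factorial_ne_zero
  have h := ringChoose_neg γ k
  rw [cCoeff_eq γ hγ k]
  field_simp
  linarith [h]

lemma cCoeff_conv (α β : ℝ) (hα : 0 < α) (hβ : 0 < β) (m : ℕ) :
    ∑ i ∈ Finset.range (m + 1), cCoeff α i * cCoeff β (m - i) = cCoeff (α + β) m := by
  have key := Ring.add_choose_eq (R := ℝ) (r := -α) (s := -β) m (Commute.all _ _)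
  rw [Finset.Nat.sum_antidiagonal_eq_sum_range_succ_mk] at key
  have h1 : (-α + -β : ℝ) = -(α + β) := by ring
  rw [h1, ringChoose_neg' _ (by linarith) m] at key
  have key2 : ((-1 : ℝ))^m * cCoeff (α + β) m
      = ∑ k ∈ Finset.range (m + 1), ((-1 : ℝ))^m * (cCoeff α k * cCoeff β (m - k)) := by
    rw [key]
    apply Finset.sum_congr rfl
    intro k hk
    rw [ringChoose_neg' α hα, ringChoose_neg' β hβ]
    have hk' : k ≤ m := Nat.lt_succ_iff.mp (Finset.mem_range.mp hk)
    have hs : ((-1 : ℝ))^k * ((-1 : ℝ))^(m - k) = (-1)^m := by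
      rw [← pow_add]; congr 1; omega
    calc ((-1 : ℝ))^k * cCoeff α k * ((-1 : ℝ)^(m - k) * cCoeff β (m - k))
        = ((-1 : ℝ))^k * ((-1 : ℝ))^(m - k) * (cCoeff α k * cCoeff β (m - k)) := by ring
      _ = ((-1 : ℝ))^m * (cCoeff α k * cCoeff β (m - k)) := by rw [hs]
  rw [← Finset.mul_sum] at key2
  exact (mul_left_cancel₀ (pow_ne_zero m (by norm_num : (-1 : ℝ) ≠ 0)) key2).symm

lemma fracSum_comp (h α β : ℝ) (hh : 0 < h) (hα : 0 < α) (hβ : 0 < β)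
    (u : ℕ → ℝ) (n : ℕ) :
    fracSum h α (fracSum h β u) n = fracSum h (α + β) u n := by
  simp only [fracSum]
  rw [Real.rpow_add hh, mul_assoc]
  congr 1
  rw [Finset.mul_sum]
  have lhs_eq : ∑ j ∈ range (n + 1),
        cCoeff α (n - j) * (h ^ β * ∑ k ∈ range (j + 1), cCoeff β (j - k) * u k)
      = ∑ j ∈ range (n + 1), ∑ k ∈ range (j + 1),
          h ^ β * (cCoeff α (n - j) * (cCoeff β (j - k) * u k)) := by
    apply sum_congr rfl; intro j _
    rw [Finset.mul_sum, Finset.mul_sum]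
    apply sum_congr rfl; intro k _; ring
  rw [lhs_eq]
  have swap : ∑ j ∈ range (n + 1), ∑ k ∈ range (j + 1),
        h ^ β * (cCoeff α (n - j) * (cCoeff β (j - k) * u k))
      = ∑ k ∈ range (n + 1), ∑ j ∈ Finset.Ico k (n + 1),
          h ^ β * (cCoeff α (n - j) * (cCoeff β (j - k) * u k)) := by
    have hcomm := Finset.sum_Ico_Ico_comm 0 (n + 1)
      (fun k j => h ^ β * (cCoeff α (n - j) * (cCoeff β (j - k) * u k)))
    simp only [Finset.range_eq_Ico]
    exact hcomm.symm
  rw [swap]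
  apply sum_congr rfl
  intro k hk
  have hkn : k ≤ n := Nat.lt_succ_iff.mp (Finset.mem_range.mp hk)
  rw [Finset.sum_Ico_eq_sum_range]
  have hm : n + 1 - k = (n - k) + 1 := by omega
  rw [hm]
  have step : ∑ i ∈ range ((n - k) + 1),
        h ^ β * (cCoeff α (n - (k + i)) * (cCoeff β ((k + i) - k) * u k))
      = h ^ β * ((∑ i ∈ range ((n - k) + 1), cCoeff β i * cCoeff α ((n - k) - i)) * u k) := by
    rw [Finset.sum_mul, Finset.mul_sum]
    apply sum_congr rfl; intro i hi
    have h1 : n - (k + i) = (n - k) - i := by omega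
    have h2 : (k + i) - k = i := by omega
    rw [h1, h2]; ring
  rw [step, cCoeff_conv β α hβ hα (n - k), add_comm β α]

theorem fracSum_semigroup (h α β : ℝ) (hh : 0 < h) (hα : 0 < α) (hβ : 0 < β)
    (u : ℕ → ℝ) (n : ℕ) :
    fracSum h α (fracSum h β u) n = fracSum h (α + β) u n
      ∧ fracSum h β (fracSum h α u) n = fracSum h (α + β) u n := by
  refine ⟨fracSum_comp h α β hh hα hβ u n, ?_⟩
  rw [add_comm α β]
  exact fracSum_comp h β α hh hβ hα u n
end
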